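/- The formal power series T(x) satisfying T(x) = 1 + x·T(x)^3 with T(0)=1 has coefficients [x^n] T(x) = (1/(2n+1)) * binomial(3n, n) for all n ≥ 0. -/

import Mathlib

open PowerSeries

theorem ternary_coeff
    (T : PowerSeries ℚ) (hT0 : constantCoeff T = 1) (hT : T = 1 + X * T ^ 3) :
    ∀ n : ℕ, coeff n T = (1 / (2 * (n : ℚ) + 1)) * (Nat.choose (3 * n) n : ℚ) := by
  have d3 : d⁄dX ℚ ((3 : ℚ⟦X⟧)) = 0 := by
    rw [show (3 : ℚ⟦X⟧) = ((3 : ℕ) : ℚ⟦X⟧) by norm_num, Derivation.map_natCast]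
  have hU : d⁄dX ℚ T = T^3 + 3*X*T^2*(d⁄dX ℚ T) := by
    nth_rewrite 1 [hT]
    simp only [map_add, Derivation.map_one_eq_zero, Derivation.leibniz,
      Derivation.leibniz_pow, derivative_X, d3, smul_eq_mul, nsmul_eq_mul, zero_add]
    push_cast
    ring
  have hV : d⁄dX ℚ (d⁄dX ℚ T) = 6*T^2*(d⁄dX ℚ T) + 6*X*T*(d⁄dX ℚ T)^2
      + 3*X*T^2*(d⁄dX ℚ (d⁄dX ℚ T)) := by
    conv_lhs => rw [hU]
    simp only [map_add, Derivation.leibniz, Derivation.leibniz_pow, derivative_X, d3,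
      smul_eq_mul, nsmul_eq_mul]
    push_cast
    ring
  set U := d⁄dX ℚ T with hUdef
  set V := d⁄dX ℚ U with hVdef
  have h0 : X*T^3 = T - 1 := by linear_combination -hT
  have hUh : U*(1-3*X*T^2) = T^3 := by linear_combination hU
  have hVh : V*(1-3*X*T^2) = 6*T^2*U + 6*X*T*U^2 := by linear_combination hV
  have key : (1-3*X*T^2)^3 * (X*(4-27*X)*V + (6-54*X)*U - 6*T) = 0 := by
    linear_combination (4*X - 27*X^2 - 24*X^2*T^2 + 162*X^3*T^2 + 36*X^3*T^4
        - 243*X^4*T^4) * hVh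
      + (6 - 54*X - 12*X*T^2 + 24*X^2*T*U + 162*X^2*T^2 + 6*X^2*T^4 - 162*X^3*T*U
        - 72*X^3*T^3*U - 162*X^3*T^4 + 486*X^4*T^3*U) * hUh
      + (-6*T - 6*T^2 + 6*X*T^4) * h0
  have hne : (1 - 3*X*T^2 : PowerSeries ℚ) ≠ 0 := by
    intro hcon
    have h := congrArg (constantCoeff) hcon
    simp [map_sub, map_mul, map_pow, constantCoeff_X] at h
  have mainEq : X*(4-27*X)*V + (6-54*X)*U - 6*T = 0 :=
    (mul_eq_zero.mp key).resolve_left (pow_ne_zero _ hne)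
  have main' : C 4 * (X*V) + C 6 * U = C 27 * (X*(X*V)) + C 54 * (X*U) + C 6 * T := by
    simp only [map_ofNat]
    linear_combination mainEq
  have zX : ∀ f : ℚ⟦X⟧, coeff 0 (X*f) = 0 := by
    intro f
    rw [coeff_zero_eq_constantCoeff, map_mul, constantCoeff_X, zero_mul]
  have hrec : ∀ m : ℕ, (2*(m:ℚ)+2)*(2*(m:ℚ)+3) * coeff (m+1) T
      = 3*(3*(m:ℚ)+1)*(3*(m:ℚ)+2) * coeff m T := by
    intro m
    match m with
    | 0 =>
      have h := congrArg (coeff 0) main'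
      simp only [hVdef, hUdef, map_add, coeff_C_mul, zX, coeff_derivative,
        coeff_zero_eq_constantCoeff, mul_zero, zero_add, add_zero] at h
      rw [hT0] at h
      have hc0 : coeff 0 T = 1 := by rw [coeff_zero_eq_constantCoeff_apply, hT0]
      rw [hc0]
      push_cast at h ⊢
      linear_combination h
    | 1 =>
      have h := congrArg (coeff (0+1)) main'
      simp only [hVdef, hUdef, map_add, coeff_C_mul, coeff_succ_X_mul, zX,
        coeff_derivative, coeff_zero_eq_constantCoeff, mul_zero, zero_add, add_zero] at h
      push_cast at h ⊢
      ring_nf at h ⊢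
      linear_combination h
    | (k+2) =>
      have h := congrArg (coeff (k+1+1)) main'
      simp only [hVdef, hUdef, map_add, coeff_C_mul, coeff_succ_X_mul,
        coeff_derivative] at h
      push_cast at h ⊢
      ring_nf at h ⊢
      linear_combination h
  have ident : ∀ n : ℕ, 3*(3*(n:ℚ)+1)*(3*(n:ℚ)+2) * (Nat.choose (3*n) n : ℚ)
      = (2*(n:ℚ)+2)*(2*(n:ℚ)+1) * (Nat.choose (3*n+3) (n+1) : ℚ) := by
    intro n
    have f1 : ((Nat.factorial (3*n+3)) : ℚ) = (3*(n:ℚ)+3)*((3*(n:ℚ)+2)*((3*(n:ℚ)+1)*(Nat.factorial (3*n) : ℚ))) := by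
      rw [(show 3*n+3 = 3*n+2+1 by omega), Nat.factorial_succ,
        (show 3*n+2 = 3*n+1+1 by omega), Nat.factorial_succ, Nat.factorial_succ]
      push_cast
      ring
    have f2 : ((Nat.factorial (n+1)) : ℚ) = ((n:ℚ)+1)*(Nat.factorial n : ℚ) := by
      rw [Nat.factorial_succ]; push_cast; ring
    have f3 : ((Nat.factorial (2*n+2)) : ℚ) = (2*(n:ℚ)+2)*((2*(n:ℚ)+1)*(Nat.factorial (2*n) : ℚ)) := by
      rw [(show 2*n+2 = 2*n+1+1 by omega), Nat.factorial_succ, Nat.factorial_succ]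
      push_cast
      ring
    rw [Nat.cast_choose ℚ (by omega : n ≤ 3*n), Nat.cast_choose ℚ (by omega : n+1 ≤ 3*n+3),
      (show 3*n - n = 2*n by omega), (show 3*n+3 - (n+1) = 2*n+2 by omega), f1, f2, f3]
    have hf1 : ((Nat.factorial (3*n)) : ℚ) ≠ 0 := Nat.cast_ne_zero.mpr (Nat.factorial_ne_zero _)
    have hf2 : ((Nat.factorial (2*n)) : ℚ) ≠ 0 := Nat.cast_ne_zero.mpr (Nat.factorial_ne_zero _)
    have hf3 : ((Nat.factorial n) : ℚ) ≠ 0 := Nat.cast_ne_zero.mpr (Nat.factorial_ne_zero _)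
    have h1 : ((n:ℚ)+1) ≠ 0 := by positivity
    have h2 : (2*(n:ℚ)+1) ≠ 0 := by positivity
    have h3 : (2*(n:ℚ)+2) ≠ 0 := by positivity
    field_simp
  intro n
  induction n with
  | zero => simp [hT0]
  | succ n ih =>
    have h1 := hrec n
    rw [ih] at h1
    have hd2 : (2*(n:ℚ)+3) ≠ 0 := by positivity
    have hd1 : (2*(n:ℚ)+2) ≠ 0 := by positivity
    have hd3 : (2*(n:ℚ)+1) ≠ 0 := by positivity
    rw [(show 3*(n+1) = 3*n+3 by ring)]
    push_cast
    have expand : coeff (n+1) T = 3*(3*(n:ℚ)+1)*(3*(n:ℚ)+2)*((Nat.choose (3*n) n : ℚ))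
        / ((2*(n:ℚ)+2)*(2*(n:ℚ)+3)*(2*(n:ℚ)+1)) := by
      rw [eq_div_iff (by positivity)]
      field_simp at h1
      linear_combination h1
    rw [expand, ident n]
    field_simp
    ring
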